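/- Let H be a real inner product space and fix reals α, β ≥ 0, D ≥ 0 and integers K_c, K_g, Z ≥ 1 with 2√2·β·(K_g−1)^{3/2} ≤ 1. Consider cloud iterates w : ℕ → H with a delay function τ : ℕ → ℕ satisfying τ(h) ≤ h − 1 and h − τ(h) ≤ K_c for all h ≥ 1, and update rule w(h) = (1−α)·w(h−1) + α·v(h), where for each h ≥ 1 the received model v(h) = ω_h(Z) is produced by a gateway run ω_h : ℕ → H started at ω_h(0) = w(τ(h)) with gateway updates ω_h(z) = (1−β)·ω_h(z−1) + β·u_h(z), gateway delays ζ_h(z) ≤ z − 1, z − ζ_h(z) ≤ K_g, and ‖u_h(z) − ω_h(ζ_h(z))‖ ≤ D for all z ≥ 1. Set Q(h) = ‖w(τ(h)) − w(h−1)‖² for h ≥ 1 and Q(h) = 0 for h ≤ 0, and G² = 2Z²β²D²(1 + 4β²(K_g−1)²). Then for every h ≥ 1: Q(h) ≤ 2(K_c−1)α²·( (K_c−1)·G² + ∑_{r=1}^{K_c−1} Q(h−r) ). -/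

import Mathlib

set_option maxHeartbeats 2000000

open Finset in
private lemma asyncHFL_tel {H : Type*} [AddCommGroup H] (x d : ℕ → H)
    (hx : ∀ z : ℕ, 1 ≤ z → x z = x (z - 1) + d z) :
    ∀ m n : ℕ, m ≤ n → x n - x m = ∑ s ∈ Finset.Icc (m + 1) n, d s := by
  intro m n h
  induction n, h using Nat.le_induction with
  | base => simp
  | succ n hn ih =>
      rw [Finset.sum_Icc_succ_top (by omega), ← ih, hx (n + 1) (by omega)]
      simp only [Nat.add_sub_cancel]
      abel


/-- Deterministic counterpart of Lemma 8 (Cloud delay recursion) of the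
Async-HFL convergence analysis: the squared cloud staleness residual
`Q(h) = ‖w(τ(h)) − w(h−1)‖²`, where each received model `v(h) = ω_h(Z)` is
produced by `Z` asynchronous gateway steps (drift bound `D`, mixing weight `β`,
maximal gateway delay `K_g`) started from the stale cloud model `w(τ(h))`,
satisfies the stated recursion with `G² = 2Z²β²D²(1 + 4β²(K_g−1)²)`. -/
theorem asyncHFL_cloud_delay_recursion
    {H : Type*} [NormedAddCommGroup H] [InnerProductSpace ℝ H]
    (α β D : ℝ) (Kc Kg Z : ℕ)
    (hα : 0 ≤ α) (hβ : 0 ≤ β) (hD : 0 ≤ D)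
    (hKc : 1 ≤ Kc) (hKg : 1 ≤ Kg) (hZ : 1 ≤ Z)
    (hβcond : 2 * Real.sqrt 2 * β * ((Kg : ℝ) - 1) ^ ((3 : ℝ) / 2) ≤ 1)
    (w v : ℕ → H) (τ : ℕ → ℕ)
    (ωg u : ℕ → ℕ → H) (ζ : ℕ → ℕ → ℕ)
    (Q : ℤ → ℝ) (G2 : ℝ)
    (hτ : ∀ h : ℕ, 1 ≤ h → τ h ≤ h - 1)
    (hτK : ∀ h : ℕ, 1 ≤ h → h - τ h ≤ Kc)
    (hw : ∀ h : ℕ, 1 ≤ h → w h = (1 - α) • w (h - 1) + α • v h)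
    (hv : ∀ h : ℕ, 1 ≤ h → v h = ωg h Z)
    (hω0 : ∀ h : ℕ, 1 ≤ h → ωg h 0 = w (τ h))
    (hωz : ∀ h : ℕ, 1 ≤ h → ∀ z : ℕ, 1 ≤ z →
      ωg h z = (1 - β) • ωg h (z - 1) + β • u h z)
    (hζ : ∀ h : ℕ, 1 ≤ h → ∀ z : ℕ, 1 ≤ z → ζ h z ≤ z - 1)
    (hζK : ∀ h : ℕ, 1 ≤ h → ∀ z : ℕ, 1 ≤ z → z - ζ h z ≤ Kg)
    (hu : ∀ h : ℕ, 1 ≤ h → ∀ z : ℕ, 1 ≤ z → ‖u h z - ωg h (ζ h z)‖ ≤ D)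
    (hQ : ∀ h : ℕ, 1 ≤ h → Q h = ‖w (τ h) - w (h - 1)‖ ^ 2)
    (hQ0 : ∀ h : ℤ, h ≤ 0 → Q h = 0)
    (hG2 : G2 = 2 * (Z : ℝ) ^ 2 * β ^ 2 * D ^ 2 *
      (1 + 4 * β ^ 2 * ((Kg : ℝ) - 1) ^ 2)) :
    ∀ h : ℕ, 1 ≤ h →
      Q h ≤ 2 * ((Kc : ℝ) - 1) * α ^ 2 *
        (((Kc : ℝ) - 1) * G2 +
          ∑ r ∈ Finset.Icc 1 (Kc - 1), Q ((h : ℤ) - (r : ℤ))) := by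
  classical
  obtain ⟨k, hkdef⟩ : ∃ k : ℝ, k = (Kg : ℝ) - 1 := ⟨_, rfl⟩
  rw [← hkdef] at hβcond hG2
  have hKgR : (1 : ℝ) ≤ (Kg : ℝ) := by exact_mod_cast hKg
  have hk0 : (0 : ℝ) ≤ k := by rw [hkdef]; linarith
  -- step size condition : β * k ≤ 1/2
  have hβk : β * k ≤ 1 / 2 := by
    rcases eq_or_lt_of_le hKg with h1 | h2
    · have : k = 0 := by rw [hkdef, ← h1]; norm_num
      rw [this]; norm_num
    · have hk1 : (1 : ℝ) ≤ k := by
        have : (2 : ℝ) ≤ (Kg : ℝ) := by exact_mod_cast h2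
        rw [hkdef]; linarith
      have e1 : k ≤ k ^ ((3 : ℝ) / 2) := by
        calc k = k ^ (1 : ℝ) := (Real.rpow_one k).symm
        _ ≤ k ^ ((3 : ℝ) / 2) := Real.rpow_le_rpow_of_exponent_le hk1 (by norm_num)
      have h2s : (1 : ℝ) ≤ Real.sqrt 2 := by
        rw [show (1 : ℝ) = Real.sqrt 1 by simp]
        exact Real.sqrt_le_sqrt (by norm_num)
      have ht0 : 0 ≤ k ^ ((3 : ℝ) / 2) := Real.rpow_nonneg hk0 _
      nlinarith [mul_le_mul_of_nonneg_left e1 hβ, mul_nonneg hβ ht0,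
        mul_nonneg (by linarith : (0:ℝ) ≤ Real.sqrt 2 - 1) (mul_nonneg hβ ht0)]
  have hG2nn : 0 ≤ G2 := by rw [hG2]; positivity
  -- gateway drift bound
  have gbd : ∀ h : ℕ, 1 ≤ h → ∀ z : ℕ, 1 ≤ z →
      ‖u h z - ωg h (z - 1)‖ ≤ D + 2 * β * k * D := by
    intro h hh z
    induction z using Nat.strong_induction_on with
    | _ z ih =>
      intro hz
      have tele : ∀ a b : ℕ, a ≤ b → ωg h b - ωg h a =
          ∑ s ∈ Finset.Icc (a + 1) b, β • (u h s - ωg h (s - 1)) := by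
        apply asyncHFL_tel
        intro s hs
        rw [hωz h hh s hs]
        module
      have hζ1 : ζ h z ≤ z - 1 := hζ h hh z hz
      have hcard : ((Finset.Icc (ζ h z + 1) (z - 1)).card : ℝ) ≤ k := by
        have h1 : (Finset.Icc (ζ h z + 1) (z - 1)).card = z - 1 - ζ h z := by
          rw [Nat.card_Icc]; omega
        have h2 : z - 1 - ζ h z ≤ Kg - 1 := by
          have := hζK h hh z hz; omega
        have : ((z - 1 - ζ h z : ℕ) : ℝ) ≤ ((Kg - 1 : ℕ) : ℝ) := by exact_mod_cast h2
        rw [h1, hkdef]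
        rw [Nat.cast_sub hKg] at this
        simpa using this
      have hmid : ‖ωg h (z - 1) - ωg h (ζ h z)‖ ≤ k * (β * (2 * D)) := by
        rw [tele _ _ hζ1]
        calc ‖∑ s ∈ Finset.Icc (ζ h z + 1) (z - 1), β • (u h s - ωg h (s - 1))‖
            ≤ ∑ s ∈ Finset.Icc (ζ h z + 1) (z - 1), ‖β • (u h s - ωg h (s - 1))‖ :=
              norm_sum_le _ _
          _ ≤ ∑ _s ∈ Finset.Icc (ζ h z + 1) (z - 1), β * (2 * D) := by
              apply Finset.sum_le_sum
              intro s hs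
              have hs1 : 1 ≤ s := by
                have := Finset.mem_Icc.mp hs; omega
              have hslt : s < z := by
                have := Finset.mem_Icc.mp hs; omega
              have hbs : ‖u h s - ωg h (s - 1)‖ ≤ 2 * D := by
                have := ih s hslt hs1
                nlinarith [mul_le_mul_of_nonneg_right hβk hD]
              rw [norm_smul, Real.norm_eq_abs, abs_of_nonneg hβ]
              exact mul_le_mul_of_nonneg_left hbs hβ
          _ = ((Finset.Icc (ζ h z + 1) (z - 1)).card : ℝ) * (β * (2 * D)) := by
              rw [Finset.sum_const, nsmul_eq_mul]
          _ ≤ k * (β * (2 * D)) := by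
              apply mul_le_mul_of_nonneg_right hcard
              positivity
      have hsplit : u h z - ωg h (z - 1) =
          (u h z - ωg h (ζ h z)) - (ωg h (z - 1) - ωg h (ζ h z)) := by abel
      calc ‖u h z - ωg h (z - 1)‖
          ≤ ‖u h z - ωg h (ζ h z)‖ + ‖ωg h (z - 1) - ωg h (ζ h z)‖ := by
            rw [hsplit]; exact norm_sub_le _ _
        _ ≤ D + k * (β * (2 * D)) := add_le_add (hu h hh z hz) hmid
        _ = D + 2 * β * k * D := by ring
  -- received model drift : ‖v j − w (τ j)‖ ≤ β Z (D + 2βkD) and its square ≤ G2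
  have hvd2 : ∀ j : ℕ, 1 ≤ j → ‖v j - w (τ j)‖ ^ 2 ≤ G2 := by
    intro j hj
    have tele : ωg j Z - ωg j 0 =
        ∑ s ∈ Finset.Icc 1 Z, β • (u j s - ωg j (s - 1)) := by
      have := asyncHFL_tel (ωg j) (fun s => β • (u j s - ωg j (s - 1)))
        (fun s hs => by rw [hωz j hj s hs]; module) 0 Z (Nat.zero_le _)
      simpa using this
    have hnrm : ‖v j - w (τ j)‖ ≤ (Z : ℝ) * (β * (D + 2 * β * k * D)) := by
      rw [hv j hj, ← hω0 j hj, tele]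
      calc ‖∑ s ∈ Finset.Icc 1 Z, β • (u j s - ωg j (s - 1))‖
          ≤ ∑ s ∈ Finset.Icc 1 Z, ‖β • (u j s - ωg j (s - 1))‖ := norm_sum_le _ _
        _ ≤ ∑ _s ∈ Finset.Icc 1 Z, β * (D + 2 * β * k * D) := by
            apply Finset.sum_le_sum
            intro s hs
            have hs1 : 1 ≤ s := (Finset.mem_Icc.mp hs).1
            rw [norm_smul, Real.norm_eq_abs, abs_of_nonneg hβ]
            exact mul_le_mul_of_nonneg_left (gbd j hj s hs1) hβ
        _ = ((Finset.Icc 1 Z).card : ℝ) * (β * (D + 2 * β * k * D)) := by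
            rw [Finset.sum_const, nsmul_eq_mul]
        _ = (Z : ℝ) * (β * (D + 2 * β * k * D)) := by
            rw [Nat.card_Icc]; norm_num
    have hsq : ‖v j - w (τ j)‖ ^ 2 ≤ ((Z : ℝ) * (β * (D + 2 * β * k * D))) ^ 2 :=
      pow_le_pow_left₀ (norm_nonneg _) hnrm 2
    refine hsq.trans ?_
    rw [hG2]
    nlinarith [sq_nonneg ((Z : ℝ) * β * D * (1 - 2 * (β * k))), sq_nonneg ((Z:ℝ) * β * D)]
  -- nonnegativity of the Q terms
  have Qnn : ∀ (h : ℕ) (r : ℕ), 0 ≤ Q ((h : ℤ) - (r : ℤ)) := by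
    intro h r
    by_cases hr : r < h
    · have he : (h : ℤ) - (r : ℤ) = ((h - r : ℕ) : ℤ) := by omega
      rw [he, hQ (h - r) (by omega)]
      positivity
    · rw [hQ0 _ (by omega)]
  -- main argument
  intro h hh
  have hm : τ h ≤ h - 1 := hτ h hh
  have hmK : h - τ h ≤ Kc := hτK h hh
  obtain ⟨S, hSdef⟩ : ∃ S : Finset ℕ, S = Finset.Icc (τ h + 1) (h - 1) := ⟨_, rfl⟩
  have tele : w (h - 1) - w (τ h) =
      ∑ j ∈ S, α • (v j - w (j - 1)) := by
    rw [hSdef]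
    apply asyncHFL_tel w (fun j => α • (v j - w (j - 1)))
      (fun j hj => by rw [hw j hj]; module) _ _ hm
  obtain ⟨c, hcdef⟩ : ∃ c : ℝ, c = (S.card : ℝ) := ⟨_, rfl⟩
  have hc0 : (0 : ℝ) ≤ c := by rw [hcdef]; positivity
  have hcK : c ≤ (Kc : ℝ) - 1 := by
    have h1 : S.card = h - 1 - τ h := by rw [hSdef, Nat.card_Icc]; omega
    have h2 : h - 1 - τ h ≤ Kc - 1 := by omega
    have h3 : ((h - 1 - τ h : ℕ) : ℝ) ≤ ((Kc - 1 : ℕ) : ℝ) := by exact_mod_cast h2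
    rw [Nat.cast_sub hKc] at h3
    rw [hcdef, h1]; simpa using h3
  have hjS : ∀ j ∈ S, 1 ≤ j ∧ j ≤ h - 1 := by
    intro j hj
    rw [hSdef] at hj
    have := Finset.mem_Icc.mp hj; omega
  -- pointwise bound
  have key : ∀ j ∈ S, ‖v j - w (j - 1)‖ ^ 2 ≤ 2 * G2 + 2 * Q j := by
    intro j hj
    obtain ⟨hj1, _⟩ := hjS j hj
    have hb : ‖v j - w (j - 1)‖ ≤ ‖v j - w (τ j)‖ + ‖w (τ j) - w (j - 1)‖ := by
      calc ‖v j - w (j - 1)‖ = ‖(v j - w (τ j)) + (w (τ j) - w (j - 1))‖ := by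
            rw [sub_add_sub_cancel]
        _ ≤ _ := norm_add_le _ _
    have hx2 := hvd2 j hj1
    have hQj := hQ j hj1
    have h1 : ‖v j - w (j - 1)‖ ^ 2 ≤ (‖v j - w (τ j)‖ + ‖w (τ j) - w (j - 1)‖) ^ 2 :=
      pow_le_pow_left₀ (norm_nonneg _) hb 2
    have h2 : (‖v j - w (τ j)‖ + ‖w (τ j) - w (j - 1)‖) ^ 2 ≤
        2 * ‖v j - w (τ j)‖ ^ 2 + 2 * ‖w (τ j) - w (j - 1)‖ ^ 2 := by
      nlinarith [sq_nonneg (‖v j - w (τ j)‖ - ‖w (τ j) - w (j - 1)‖)]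
    linarith
  obtain ⟨SQ, hSQdef⟩ : ∃ x : ℝ, x = ∑ j ∈ S, Q ↑j := ⟨_, rfl⟩
  have hSQ0 : 0 ≤ SQ := by
    rw [hSQdef]
    apply Finset.sum_nonneg
    intro j hj
    rw [hQ j (hjS j hj).1]; positivity
  -- chain of bounds
  have step1 : Q ↑h ≤ (∑ j ∈ S, α * ‖v j - w (j - 1)‖) ^ 2 := by
    rw [hQ h hh, norm_sub_rev]
    apply pow_le_pow_left₀ (norm_nonneg _)
    rw [tele]
    refine (norm_sum_le _ _).trans ?_
    apply Finset.sum_le_sum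
    intro j _
    rw [norm_smul, Real.norm_eq_abs, abs_of_nonneg hα]
  have step2 : (∑ j ∈ S, α * ‖v j - w (j - 1)‖) ^ 2 ≤
      c * ∑ j ∈ S, (α * ‖v j - w (j - 1)‖) ^ 2 := by
    rw [hcdef]
    exact sq_sum_le_card_mul_sum_sq
  have step3 : ∑ j ∈ S, (α * ‖v j - w (j - 1)‖) ^ 2 ≤
      α ^ 2 * (2 * c * G2 + 2 * SQ) := by
    have : ∑ j ∈ S, (α * ‖v j - w (j - 1)‖) ^ 2 ≤
        ∑ j ∈ S, α ^ 2 * (2 * G2 + 2 * Q j) := by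
      apply Finset.sum_le_sum
      intro j hj
      rw [mul_pow]
      exact mul_le_mul_of_nonneg_left (key j hj) (sq_nonneg α)
    refine this.trans ?_
    rw [← Finset.mul_sum]
    apply mul_le_mul_of_nonneg_left _ (sq_nonneg α)
    have he : ∑ j ∈ S, (2 * G2 + 2 * Q j) = 2 * c * G2 + 2 * SQ := by
      rw [Finset.sum_add_distrib, Finset.sum_const, nsmul_eq_mul, ← Finset.mul_sum,
        hSQdef, hcdef]
      ring
    exact le_of_eq he
  have mid : Q ↑h ≤ c * (α ^ 2 * (2 * c * G2 + 2 * SQ)) :=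
    step1.trans (step2.trans (mul_le_mul_of_nonneg_left step3 hc0))
  -- reindex the sum of Q's
  obtain ⟨T, hTdef⟩ : ∃ x : ℝ, x = ∑ r ∈ Finset.Icc 1 (Kc - 1), Q ((h : ℤ) - (r : ℤ)) :=
    ⟨_, rfl⟩
  have hST : SQ ≤ T := by
    have hinj : ∀ j ∈ S, ∀ j' ∈ S, h - j = h - j' → j = j' := by
      intro j hj j' hj' he
      have h1 := hjS j hj
      have h2 := hjS j' hj'
      omega
    have himg : ∑ r ∈ S.image (fun j => h - j), Q ((h : ℤ) - (r : ℤ)) =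
        ∑ j ∈ S, Q ↑j := by
      rw [Finset.sum_image hinj]
      apply Finset.sum_congr rfl
      intro j hj
      have := hjS j hj
      congr 1
      omega
    have hsub : S.image (fun j => h - j) ⊆ Finset.Icc 1 (Kc - 1) := by
      intro r hr
      obtain ⟨j, hj, rfl⟩ := Finset.mem_image.mp hr
      have h1 := hjS j hj
      rw [hSdef] at hj
      have h2 := Finset.mem_Icc.mp hj
      rw [Finset.mem_Icc]
      omega
    rw [hSQdef, ← himg, hTdef]
    exact Finset.sum_le_sum_of_subset_of_nonneg hsub (fun r _ _ => Qnn h r)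
  have hT0 : 0 ≤ T := hSQ0.trans hST
  have hK0 : (0 : ℝ) ≤ (Kc : ℝ) - 1 := hc0.trans hcK
  refine mid.trans ?_
  rw [← hTdef]
  have A : α ^ 2 * G2 * (c * c) ≤ α ^ 2 * G2 * (((Kc : ℝ) - 1) * ((Kc : ℝ) - 1)) :=
    mul_le_mul_of_nonneg_left (mul_le_mul hcK hcK hc0 hK0)
      (mul_nonneg (sq_nonneg α) hG2nn)
  have B : α ^ 2 * (c * SQ) ≤ α ^ 2 * (((Kc : ℝ) - 1) * T) :=
    mul_le_mul_of_nonneg_left (mul_le_mul hcK hST hSQ0 hK0) (sq_nonneg α)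
  nlinarith [A, B]
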